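/- arXiv:1512.04326 — 2 statements merged into one kernel-verified Lean document; each statement's English description precedes it below -/
import Mathlib

section
/- Let α be a k-anxious number, (a_i) ∈ A_α, and let h ∈ K(z) be a nonzero rational function. Then for any finite sequence (c_1,…,c_n) of rational functions: clm_{α,(a_i)}(h*(c_i)) = clm_{α,(a_i)}(c_i) − v_α(h) if α is not a root of unity, and clm_{α,(a_i)}(h*(c_i)) = clm_{α,(a_i)}(c_i) if α is a root of unity. -/
open Polynomial

attribute [local instance] Classical.propDecidable

noncomputable section

variable {K : Type*} [Field K]

/-- Integer order of vanishing of a rational function at `α` (junk value `0` for `c = 0`). -/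
def vInt (α : K) (c : RatFunc K) : ℤ :=
  (c.num.rootMultiplicity α : ℤ) - (c.denom.rootMultiplicity α : ℤ)

/-- The `(z - α)`-adic valuation on `K(z)`, with `vAt α 0 = ⊤`. -/
def vAt (α : K) (c : RatFunc K) : WithTop ℤ :=
  if c = 0 then ⊤ else (vInt α c : WithTop ℤ)

/-- Substitution `z ↦ z^i` in a rational function. -/
def substPow (i : ℕ) (c : RatFunc K) : RatFunc K :=
  RatFunc.eval (algebraMap K (RatFunc K)) (RatFunc.X ^ i) c

/-- A polynomial viewed as a rational function. -/
def toRat (p : Polynomial K) : RatFunc K := algebraMap (Polynomial K) (RatFunc K) p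

/-- A rational function is a polynomial. -/
def IsPolyFun (c : RatFunc K) : Prop := ∃ p : Polynomial K, c = toRat p

def IsRootOfUnity (α : K) : Prop := ∃ m : ℕ, 0 < m ∧ α ^ m = 1

/-- `α` is `k`-calm: zero, or a root of unity whose order is not coprime to `k`. -/
def IsCalmNum (k : ℕ) (α : K) : Prop :=
  α = 0 ∨ (0 < orderOf α ∧ ¬ Nat.Coprime (orderOf α) k)

def IsAnxious (k : ℕ) (α : K) : Prop := ¬ IsCalmNum k α

/-- A rational function is `k`-calm: no poles at `k`-anxious numbers. -/
def IsCalmFun (k : ℕ) (c : RatFunc K) : Prop :=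
  ∀ α : K, IsAnxious k α → 0 ≤ vAt α c

/-- Action of a rational function `h` on a finite sequence `(c_1, …, c_n)`;
the index `i : Fin n` stands for the 1-based index `i+1`. -/
def act (k : ℕ) (h : RatFunc K) {n : ℕ} (c : Fin n → RatFunc K) : Fin n → RatFunc K :=
  fun i => substPow (k ^ (i.1 + 1)) h / h * c i

def IsPrecalmSeq (k : ℕ) {n : ℕ} (c : Fin n → RatFunc K) : Prop :=
  ∃ h : Polynomial K, h ≠ 0 ∧ ∀ i, IsCalmFun k (act k (toRat h) c i)

/-- Partial sums `ā_i = a_0 + … + a_{i-1}` of an infinite sequence with values in `{1,…,n}`. -/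
def abarInf {n : ℕ} (a : ℕ → Fin n) (i : ℕ) : ℕ :=
  ∑ j ∈ Finset.range i, ((a j).1 + 1)

/-- Partial sums for a finite sequence (a list). -/
def abarList {n : ℕ} (l : List (Fin n)) (i : ℕ) : ℕ :=
  ((l.take i).map (fun j => j.1 + 1)).sum

/-- Full sum `ā_μ` of a finite sequence. -/
def barSum {n : ℕ} (l : List (Fin n)) : ℕ := (l.map (fun j => j.1 + 1)).sum

/-- Calmness w.r.t. an anxious `α` that is not a root of unity and an infinite sequence. -/
def clmInf (k : ℕ) (α : K) {n : ℕ} (c : Fin n → RatFunc K) (a : ℕ → Fin n) : WithTop ℤ :=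
  if ∃ i, c (a i) = 0 then ⊤
  else ((∑ᶠ i : ℕ, vInt (α ^ k ^ abarInf a i) (c (a i)) : ℤ) : WithTop ℤ)

/-- Calmness w.r.t. an anxious root of unity `α` and a finite sequence. -/
def clmList (k : ℕ) (α : K) {n : ℕ} (c : Fin n → RatFunc K) (l : List (Fin n)) : WithTop ℤ :=
  ∑ i : Fin l.length, vAt (α ^ k ^ abarList l i.1) (c (l.get i))

/-- Calmness of a single rational function w.r.t. an anxious `α`. -/
def clmOne (k : ℕ) (α : K) (c : RatFunc K) : WithTop ℤ :=
  if hμ : ∃ μ : ℕ, 0 < μ ∧ α ^ k ^ μ = α then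
    ∑ i ∈ Finset.range (Nat.find hμ), vAt (α ^ k ^ i) c
  else if c = 0 then ⊤
  else ((∑ᶠ i : ℕ, vInt (α ^ k ^ i) c : ℤ) : WithTop ℤ)

/-- The `k`-kernel of a sequence. -/
def kernelSet (k : ℕ) (a : ℕ → K) : Set (ℕ → K) :=
  { b | ∃ e r : ℕ, r < k ^ e ∧ b = fun i => a (k ^ e * i + r) }

/-- `k`-regularity of a formal power series. -/
def IsRegularSeries (k : ℕ) (f : PowerSeries K) : Prop :=
  FiniteDimensional K (Submodule.span K (kernelSet k (fun i => PowerSeries.coeff i f)))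

/-- Cartier operator `Λ_{k,r}`. -/
def cartier (k r : ℕ) (f : PowerSeries K) : PowerSeries K :=
  PowerSeries.mk fun i => PowerSeries.coeff (k * i + r) f

/-- Substitution `z ↦ z^m` in a power series (for `m ≥ 1`). -/
def psSubstPow (m : ℕ) (f : PowerSeries K) : PowerSeries K :=
  PowerSeries.mk fun i => if m ∣ i then PowerSeries.coeff (i / m) f else 0

/-- `f` satisfies the Mahler equation `f(z) = Σ_{i=1}^n c_i(z) f(z^{k^i})`. -/
def SatisfiesMahler (k : ℕ) {n : ℕ} (c : Fin n → RatFunc K) (f : PowerSeries K) : Prop :=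
  ∃ (q : Polynomial K) (p : Fin n → Polynomial K), q ≠ 0 ∧
    (∀ i, toRat q * c i = toRat (p i)) ∧
    (q : PowerSeries K) * f = ∑ i : Fin n, ((p i : PowerSeries K) * psSubstPow (k ^ (i.1 + 1)) f)


/-- Substitution `z ↦ z^m` in a formal Laurent series (for `m ≥ 1`). -/
def lsSubstPow (m : ℕ) (g : LaurentSeries K) : LaurentSeries K :=
  if h : 0 < m then
    HahnSeries.embDomain
      (OrderEmbedding.ofStrictMono (fun n : ℤ => (m : ℤ) * n)
        (fun a b hab => by
          exact mul_lt_mul_of_pos_left hab (by exact_mod_cast h))) g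
  else 0

/-- A Laurent series `g` satisfies the Mahler equation `g(z) = Σ_{i=1}^n b_i(z) g(z^{k^i})`
with polynomial coefficients. -/
def SatisfiesMahlerPolyLS (k : ℕ) {n : ℕ} (b : Fin n → Polynomial K) (g : LaurentSeries K) : Prop :=
  g = ∑ i : Fin n, (((b i : PowerSeries K) : LaurentSeries K) * lsSubstPow (k ^ (i.1 + 1)) g)

/-- Coefficients `d_{i,m}` of the special operators associated to `(c_1, …, c_n)`:
`dCoef k c m i` is `d_{i,m}`, with value `0` outside the range `1 ≤ i ≤ m + n`. -/
def dCoef (k : ℕ) {n : ℕ} (c : Fin n → RatFunc K) : ℕ → ℕ → RatFunc K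
  | 0 => fun i => if h : 1 ≤ i ∧ i ≤ n then c ⟨i - 1, by omega⟩ else 0
  | m + 1 => fun i =>
      if _h1 : i ≤ m then dCoef k c m i
      else if _h2 : i = m + 1 then 0
      else if h3 : i ≤ m + 1 + n then
        dCoef k c m i + dCoef k c m (m + 1) * substPow (k ^ (m + 1)) (c ⟨i - m - 2, by omega⟩)
      else 0

namespace MyAux

lemma toRat_ne_zero {p : Polynomial K} (hp : p ≠ 0) : toRat p ≠ 0 :=
  RatFunc.algebraMap_ne_zero hp

lemma vInt_div_poly (α : K) {p q : Polynomial K} (hp : p ≠ 0) (hq : q ≠ 0) :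
    vInt α (toRat p / toRat q) =
      (p.rootMultiplicity α : ℤ) - (q.rootMultiplicity α : ℤ) := by
  set c : RatFunc K := toRat p / toRat q with hc
  have hcne : c ≠ 0 := div_ne_zero (toRat_ne_zero hp) (toRat_ne_zero hq)
  have h2 : toRat c.num * toRat q = toRat p * toRat c.denom := by
    have hd : toRat c.denom ≠ 0 := toRat_ne_zero c.denom_ne_zero
    have hqq : toRat q ≠ 0 := toRat_ne_zero hq
    have h0 : toRat c.num / toRat c.denom = toRat p / toRat q := by
      show algebraMap (Polynomial K) (RatFunc K) c.num / algebraMap (Polynomial K) (RatFunc K) c.denom = _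
      rw [RatFunc.num_div_denom]
    rwa [div_eq_div_iff hd hqq] at h0
  have h1 : c.num * q = p * c.denom := by
    apply IsFractionRing.injective (Polynomial K) (RatFunc K)
    simpa only [toRat, map_mul] using h2
  have h3 := congrArg (rootMultiplicity α) h1
  rw [Polynomial.rootMultiplicity_mul (mul_ne_zero (RatFunc.num_ne_zero hcne) hq),
      Polynomial.rootMultiplicity_mul (mul_ne_zero hp c.denom_ne_zero)] at h3
  unfold vInt
  omega

lemma vInt_mul (α : K) {c d : RatFunc K} (hc : c ≠ 0) (hd : d ≠ 0) :
    vInt α (c * d) = vInt α c + vInt α d := by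
  have hcd : c * d = toRat (c.num * d.num) / toRat (c.denom * d.denom) := by
    simp only [toRat, map_mul]
    rw [← div_mul_div_comm, RatFunc.num_div_denom, RatFunc.num_div_denom]
  have hc' : vInt α c = (c.num.rootMultiplicity α : ℤ) - (c.denom.rootMultiplicity α : ℤ) := rfl
  rw [hcd, vInt_div_poly α (mul_ne_zero (RatFunc.num_ne_zero hc) (RatFunc.num_ne_zero hd))
      (mul_ne_zero c.denom_ne_zero d.denom_ne_zero),
    Polynomial.rootMultiplicity_mul (mul_ne_zero (RatFunc.num_ne_zero hc) (RatFunc.num_ne_zero hd)),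
    Polynomial.rootMultiplicity_mul (mul_ne_zero c.denom_ne_zero d.denom_ne_zero)]
  unfold vInt
  push_cast
  ring

lemma vInt_div (α : K) {c d : RatFunc K} (hc : c ≠ 0) (hd : d ≠ 0) :
    vInt α (c / d) = vInt α c - vInt α d := by
  have h1 : c / d ≠ 0 := div_ne_zero hc hd
  have := vInt_mul α h1 hd
  rw [div_mul_cancel₀ _ hd] at this
  omega

lemma substPow_eq (m : ℕ) (c : RatFunc K) :
    substPow m c = toRat (Polynomial.expand K m c.num) / toRat (Polynomial.expand K m c.denom) := by
  have key : ∀ p : Polynomial K,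
      p.eval₂ (algebraMap K (RatFunc K)) (RatFunc.X ^ m) = toRat (Polynomial.expand K m p) := by
    intro p
    have hC : (algebraMap (Polynomial K) (RatFunc K)).comp C = algebraMap K (RatFunc K) := by
      rw [IsScalarTower.algebraMap_eq K (Polynomial K) (RatFunc K), Polynomial.algebraMap_eq]
    have hX : (algebraMap (Polynomial K) (RatFunc K)) (X ^ m) = RatFunc.X ^ m := by
      rw [map_pow, RatFunc.algebraMap_X]
    rw [Polynomial.expand_eq_comp_X_pow, Polynomial.comp, toRat, Polynomial.hom_eval₂, hC, hX]
  simp only [substPow, RatFunc.eval, key]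

lemma substPow_ne_zero {m : ℕ} (hm : 0 < m) {c : RatFunc K} (hc : c ≠ 0) :
    substPow m c ≠ 0 := by
  rw [substPow_eq]
  exact div_ne_zero (toRat_ne_zero ((Polynomial.expand_ne_zero hm).2 (RatFunc.num_ne_zero hc)))
    (toRat_ne_zero ((Polynomial.expand_ne_zero hm).2 c.denom_ne_zero))

lemma rootMultiplicity_pow (α : K) {q : Polynomial K} (hq : q ≠ 0) (d : ℕ) :
    (q ^ d).rootMultiplicity α = d * q.rootMultiplicity α := by
  induction d with
  | zero => simp [Polynomial.rootMultiplicity_eq_zero]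
  | succ d ih =>
      rw [pow_succ, Polynomial.rootMultiplicity_mul (mul_ne_zero (pow_ne_zero d hq) hq), ih]
      ring

lemma rootMultiplicity_X_pow_sub_C (α : K) (hα : α ≠ 0) {m : ℕ} (hm : 0 < m)
    (hmK : (m : K) ≠ 0) :
    (X ^ m - C (α ^ m)).rootMultiplicity α = 1 := by
  have hne : (X ^ m - C (α ^ m) : Polynomial K) ≠ 0 := X_pow_sub_C_ne_zero hm _
  have hroot : (X ^ m - C (α ^ m) : Polynomial K).IsRoot α := by
    simp [Polynomial.IsRoot]
  have h1 : 1 ≤ (X ^ m - C (α ^ m)).rootMultiplicity α :=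
    (Polynomial.rootMultiplicity_pos hne).2 hroot
  have h2 : ¬ (1 < (X ^ m - C (α ^ m)).rootMultiplicity α) := by
    rw [Polynomial.one_lt_rootMultiplicity_iff_isRoot hne]
    rintro ⟨-, hd⟩
    apply absurd hd
    simp only [Polynomial.IsRoot, Polynomial.derivative_sub, Polynomial.derivative_C,
      Polynomial.derivative_X_pow, sub_zero, Polynomial.eval_mul, Polynomial.eval_pow,
      Polynomial.eval_natCast, Polynomial.eval_C, Polynomial.eval_X]
    exact mul_ne_zero hmK (pow_ne_zero _ hα)
  omega

lemma rootMultiplicity_expand (α : K) (hα : α ≠ 0) {m : ℕ} (hm : 0 < m) (hmK : (m : K) ≠ 0)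
    {p : Polynomial K} (hp : p ≠ 0) :
    (Polynomial.expand K m p).rootMultiplicity α = p.rootMultiplicity (α ^ m) := by
  set β := α ^ m with hβ
  set d := p.rootMultiplicity β with hd
  set s := p /ₘ (X - C β) ^ d with hs
  have hdecomp : (X - C β) ^ d * s = p := Polynomial.pow_mul_divByMonic_rootMultiplicity_eq p β
  have hsβ : s.eval β ≠ 0 := Polynomial.eval_divByMonic_pow_rootMultiplicity_ne_zero β hp
  have hsne : s ≠ 0 := fun h => hsβ (by simp [h])
  have hexp : Polynomial.expand K m p
      = (X ^ m - C β) ^ d * Polynomial.expand K m s := by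
    rw [← hdecomp, map_mul, map_pow, map_sub, Polynomial.expand_X, Polynomial.expand_C]
  have hXne : (X ^ m - C β : Polynomial K) ≠ 0 := X_pow_sub_C_ne_zero hm _
  have h1 : ((X ^ m - C β : Polynomial K) ^ d).rootMultiplicity α = d := by
    rw [rootMultiplicity_pow α hXne, rootMultiplicity_X_pow_sub_C α hα hm hmK, mul_one]
  have h2 : (Polynomial.expand K m s).rootMultiplicity α = 0 := by
    apply Polynomial.rootMultiplicity_eq_zero
    simp only [Polynomial.IsRoot, Polynomial.expand_eval]
    exact hsβ
  rw [hexp, Polynomial.rootMultiplicity_mul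
    (mul_ne_zero (pow_ne_zero d hXne) ((Polynomial.expand_ne_zero hm).2 hsne)), h1, h2]
  omega

lemma vInt_substPow (α : K) (hα : α ≠ 0) {m : ℕ} (hm : 0 < m) (hmK : (m : K) ≠ 0)
    {c : RatFunc K} (hc : c ≠ 0) :
    vInt α (substPow m c) = vInt (α ^ m) c := by
  rw [substPow_eq,
    vInt_div_poly α ((Polynomial.expand_ne_zero hm).2 (RatFunc.num_ne_zero hc))
      ((Polynomial.expand_ne_zero hm).2 c.denom_ne_zero),
    rootMultiplicity_expand α hα hm hmK (RatFunc.num_ne_zero hc),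
    rootMultiplicity_expand α hα hm hmK c.denom_ne_zero]
  rfl

lemma vInt_eq_zero_of_not_root (α : K) {c : RatFunc K}
    (h1 : ¬ c.num.IsRoot α) (h2 : ¬ c.denom.IsRoot α) : vInt α c = 0 := by
  unfold vInt
  rw [Polynomial.rootMultiplicity_eq_zero h1, Polynomial.rootMultiplicity_eq_zero h2]
  simp

end MyAux

namespace MyAux

lemma vInt_act (k : ℕ) (hkpos : 0 < k) (hK : (k : K) ≠ 0)
    {h : RatFunc K} (hh : h ≠ 0) {n : ℕ} {c : Fin n → RatFunc K}
    (γ : K) (hγ : γ ≠ 0) (i : Fin n) (hci : c i ≠ 0) :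
    vInt γ (act k h c i) = vInt γ (c i) + (vInt (γ ^ k ^ (i.1 + 1)) h - vInt γ h) := by
  have hkpow : 0 < k ^ (i.1 + 1) := pow_pos hkpos _
  have hKpow : ((k ^ (i.1 + 1) : ℕ) : K) ≠ 0 := by push_cast; exact pow_ne_zero _ hK
  unfold act
  rw [vInt_mul γ (div_ne_zero (substPow_ne_zero hkpow hh) hh) hci,
    vInt_div γ (substPow_ne_zero hkpow hh) hh,
    vInt_substPow γ hγ hkpow hKpow hh]
  ring

lemma act_ne_zero (k : ℕ) (hkpos : 0 < k) {h : RatFunc K} (hh : h ≠ 0)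
    {n : ℕ} {c : Fin n → RatFunc K} (i : Fin n) (hci : c i ≠ 0) :
    act k h c i ≠ 0 :=
  mul_ne_zero (div_ne_zero (substPow_ne_zero (pow_pos hkpos _) hh) hh) hci

lemma act_eq_zero_iff (k : ℕ) (hkpos : 0 < k) {h : RatFunc K} (hh : h ≠ 0)
    {n : ℕ} {c : Fin n → RatFunc K} (i : Fin n) :
    act k h c i = 0 ↔ c i = 0 := by
  constructor
  · intro h0
    by_contra hci
    exact act_ne_zero k hkpos hh i hci h0
  · intro h0
    simp [act, h0]

lemma vInt_ne_zero_root {γ : K} {x : RatFunc K} (hv : vInt γ x ≠ 0) :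
    x.num.IsRoot γ ∨ x.denom.IsRoot γ := by
  by_contra hcon
  push_neg at hcon
  exact hv (vInt_eq_zero_of_not_root γ hcon.1 hcon.2)

lemma abarList_succ {n : ℕ} (l : List (Fin n)) (i : Fin l.length) :
    abarList l (i.1 + 1) = abarList l i.1 + ((l.get i).1 + 1) := by
  unfold abarList
  rw [List.take_succ, List.getElem?_eq_getElem i.isLt]
  simp [List.get_eq_getElem]

lemma abarList_length {n : ℕ} (l : List (Fin n)) :
    abarList l l.length = barSum l := by
  unfold abarList barSum
  rw [List.take_length]

end MyAux

end

theorem stmt1 {K : Type*} [Field K] [IsAlgClosed K] (k : ℕ) (hk : 2 ≤ k)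
    (hch : ∀ p : ℕ, p.Prime → CharP K p → ¬ p ∣ k)
    (α : K) (hα : IsAnxious k α)
    (h : RatFunc K) (hh : h ≠ 0) {n : ℕ} (c : Fin n → RatFunc K) :
    (¬ IsRootOfUnity α →
      ∀ a : ℕ → Fin n,
        clmInf k α (act k h c) a = (clmInf k α c a).map (fun x => x - vInt α h)) ∧
    (IsRootOfUnity α →
      ∀ l : List (Fin n), α ^ k ^ barSum l = α →
        clmList k α (act k h c) l = clmList k α c l) := by
  have hα0 : α ≠ 0 := fun h0 => hα (Or.inl h0)
  have hkpos : 0 < k := by omega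
  have hK : (k : K) ≠ 0 := by
    intro h0
    rcases CharP.char_is_prime_or_zero K (ringChar K) with hp | hp
    · exact hch _ hp (ringChar.charP K) ((CharP.cast_eq_zero_iff K _ k).1 h0)
    · haveI : CharP K 0 := hp ▸ ringChar.charP K
      haveI : CharZero K := CharP.charP_to_charZero K
      exact absurd (Nat.cast_eq_zero.1 h0) (by omega)
  have hroots_h : ({x : K | h.num.IsRoot x} ∪ {x : K | h.denom.IsRoot x}).Finite :=
    (Polynomial.finite_setOf_isRoot (RatFunc.num_ne_zero hh)).union
      (Polynomial.finite_setOf_isRoot h.denom_ne_zero)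
  constructor
  · -- α not a root of unity
    intro hru a
    have habar_succ : ∀ i, abarInf a (i + 1) = abarInf a i + ((a i).1 + 1) := by
      intro i; unfold abarInf; rw [Finset.sum_range_succ]
    have habar_mono : StrictMono (abarInf a) := strictMono_nat_of_lt_succ (by
      intro i; rw [habar_succ]; omega)
    have hβ0 : ∀ i : ℕ, α ^ k ^ abarInf a i ≠ 0 := fun i => pow_ne_zero _ hα0
    have hβlt : ∀ i j : ℕ, i < j → α ^ k ^ abarInf a i ≠ α ^ k ^ abarInf a j := by
      intro i j hij heq
      have hst : k ^ abarInf a i < k ^ abarInf a j :=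
        Nat.pow_lt_pow_right (by omega) (habar_mono hij)
      apply hru
      refine ⟨k ^ abarInf a j - k ^ abarInf a i, by omega, ?_⟩
      have h1 : α ^ (k ^ abarInf a j - k ^ abarInf a i) * α ^ k ^ abarInf a i
          = 1 * α ^ k ^ abarInf a i := by
        rw [← pow_add, Nat.sub_add_cancel (le_of_lt hst), one_mul, heq]
      exact mul_right_cancel₀ (pow_ne_zero _ hα0) h1
    have hβinj : Function.Injective (fun i : ℕ => α ^ k ^ abarInf a i) := by
      intro i j hij
      by_contra hne
      rcases Nat.lt_or_ge i j with hlt | hge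
      · exact hβlt i j hlt hij
      · exact hβlt j i (by omega) hij.symm
    by_cases h0 : ∃ i : ℕ, c (a i) = 0
    · rw [clmInf, clmInf, if_pos h0, if_pos (by
        obtain ⟨i, hi⟩ := h0
        exact ⟨i, (MyAux.act_eq_zero_iff k hkpos hh (a i)).2 hi⟩), WithTop.map_top]
    · have h0' : ¬ ∃ i : ℕ, act k h c (a i) = 0 := by
        push_neg at h0 ⊢
        exact fun i => MyAux.act_ne_zero k hkpos hh (a i) (h0 i)
      rw [clmInf, clmInf, if_neg h0', if_neg h0, WithTop.map_coe]
      push_neg at h0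
      have key : (∑ᶠ i : ℕ, vInt (α ^ k ^ abarInf a i) (act k h c (a i)))
          = (∑ᶠ i : ℕ, vInt (α ^ k ^ abarInf a i) (c (a i))) - vInt α h := by
        set F : ℕ → ℤ := fun i => vInt (α ^ k ^ abarInf a i) (c (a i)) with hF
        set G : ℕ → ℤ := fun i => vInt (α ^ k ^ abarInf a i) h with hG
        have hβsucc : ∀ i : ℕ, (α ^ k ^ abarInf a i) ^ k ^ ((a i).1 + 1)
            = α ^ k ^ abarInf a (i + 1) := by
          intro i
          rw [← pow_mul, ← pow_add, habar_succ]
        have hT : ∀ i : ℕ, vInt (α ^ k ^ abarInf a i) (act k h c (a i))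
            = F i + (G (i + 1) - G i) := by
          intro i
          rw [MyAux.vInt_act k hkpos hK hh (α ^ k ^ abarInf a i) (hβ0 i) (a i) (h0 i), hβsucc i]
        -- finite supports
        have hSc : ∀ j : Fin n,
            ({x : K | c j ≠ 0 ∧ ((c j).num.IsRoot x ∨ (c j).denom.IsRoot x)}).Finite := by
          intro j
          by_cases hcj : c j = 0
          · have : {x : K | c j ≠ 0 ∧ ((c j).num.IsRoot x ∨ (c j).denom.IsRoot x)} = ∅ := by
              ext x; simp [hcj]
            rw [this]; exact Set.finite_empty
          · apply Set.Finite.subset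
              (((Polynomial.finite_setOf_isRoot (RatFunc.num_ne_zero hcj)).union
                (Polynomial.finite_setOf_isRoot (c j).denom_ne_zero)))
            intro x hx
            exact hx.2
        have hSfin : (((⋃ j : Fin n,
            {x : K | c j ≠ 0 ∧ ((c j).num.IsRoot x ∨ (c j).denom.IsRoot x)}) ∪
            ({x : K | h.num.IsRoot x} ∪ {x : K | h.denom.IsRoot x}))).Finite :=
          (Set.finite_iUnion hSc).union hroots_h
        have hpre : ((fun i : ℕ => α ^ k ^ abarInf a i) ⁻¹'
            ((⋃ j : Fin n, {x : K | c j ≠ 0 ∧ ((c j).num.IsRoot x ∨ (c j).denom.IsRoot x)}) ∪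
            ({x : K | h.num.IsRoot x} ∪ {x : K | h.denom.IsRoot x}))).Finite :=
          Set.Finite.preimage (Function.Injective.injOn hβinj) hSfin
        have hsubF : Function.support F ⊆ (fun i : ℕ => α ^ k ^ abarInf a i) ⁻¹'
            ((⋃ j : Fin n, {x : K | c j ≠ 0 ∧ ((c j).num.IsRoot x ∨ (c j).denom.IsRoot x)}) ∪
            ({x : K | h.num.IsRoot x} ∪ {x : K | h.denom.IsRoot x})) := by
          intro i hi
          apply Set.mem_union_left
          exact Set.mem_iUnion.2 ⟨a i, ⟨h0 i, MyAux.vInt_ne_zero_root hi⟩⟩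
        have hsubG : Function.support G ⊆ (fun i : ℕ => α ^ k ^ abarInf a i) ⁻¹'
            ((⋃ j : Fin n, {x : K | c j ≠ 0 ∧ ((c j).num.IsRoot x ∨ (c j).denom.IsRoot x)}) ∪
            ({x : K | h.num.IsRoot x} ∪ {x : K | h.denom.IsRoot x})) := by
          intro i hi
          exact Set.mem_union_right _ (MyAux.vInt_ne_zero_root hi)
        have hUfin : (Function.support F ∪ Function.support G).Finite :=
          hpre.subset (Set.union_subset hsubF hsubG)
        obtain ⟨N, hN⟩ := hUfin.bddAbove
        set M := N + 1 with hM
        have hFz : ∀ i, M ≤ i → F i = 0 := by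
          intro i hi
          by_contra hFi
          have := hN (Set.mem_union_left _ (Function.mem_support.2 hFi))
          omega
        have hGz : ∀ i, M ≤ i → G i = 0 := by
          intro i hi
          by_contra hGi
          have := hN (Set.mem_union_right _ (Function.mem_support.2 hGi))
          omega
        have e1 : (∑ᶠ i : ℕ, vInt (α ^ k ^ abarInf a i) (act k h c (a i)))
            = ∑ i ∈ Finset.range M, (F i + (G (i + 1) - G i)) := by
          rw [finsum_congr hT]
          apply finsum_eq_sum_of_support_subset
          intro i hi
          simp only [Finset.coe_range, Set.mem_Iio]
          by_contra hiM
          push_neg at hiM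
          apply hi
          simp only [Function.mem_support, not_not] at *
          rw [hFz i hiM, hGz i (by omega), hGz (i + 1) (by omega)]
          ring
        have e2 : (∑ᶠ i : ℕ, vInt (α ^ k ^ abarInf a i) (c (a i)))
            = ∑ i ∈ Finset.range M, F i := by
          apply finsum_eq_sum_of_support_subset
          intro i hi
          simp only [Finset.coe_range, Set.mem_Iio]
          by_contra hiM
          push_neg at hiM
          exact hi (hFz i hiM)
        rw [e1, e2, Finset.sum_add_distrib, Finset.sum_range_sub G M, hGz M le_rfl]
        have hG0 : G 0 = vInt α h := by
          have : abarInf a 0 = 0 := rfl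
          rw [hG]
          simp only [this, pow_zero, pow_one]
        rw [hG0]
        ring
      exact_mod_cast key
  · -- α a root of unity
    intro hru l hcyc
    by_cases h0 : ∃ i : Fin l.length, c (l.get i) = 0
    · obtain ⟨i, hi⟩ := h0
      have t1 : clmList k α (act k h c) l = ⊤ :=
        WithTop.sum_eq_top.2 ⟨i, Finset.mem_univ i, by
          rw [vAt, if_pos ((MyAux.act_eq_zero_iff k hkpos hh (l.get i)).2 hi)]⟩
      have t2 : clmList k α c l = ⊤ :=
        WithTop.sum_eq_top.2 ⟨i, Finset.mem_univ i, by rw [vAt, if_pos hi]⟩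
      rw [t1, t2]
    · push_neg at h0
      have hne : ∀ i : Fin l.length, act k h c (l.get i) ≠ 0 :=
        fun i => MyAux.act_ne_zero k hkpos hh (l.get i) (h0 i)
      unfold clmList
      have recoe : ∀ (γ : K) (x : RatFunc K), x ≠ 0 → vAt γ x = ((vInt γ x : ℤ) : WithTop ℤ) :=
        fun γ x hx => if_neg hx
      rw [Finset.sum_congr rfl (fun i _ => recoe _ _ (hne i)),
        Finset.sum_congr rfl (fun i _ => recoe _ _ (h0 i)), ← WithTop.coe_sum, ← WithTop.coe_sum]
      congr 1
      have hγ0 : ∀ j : ℕ, α ^ k ^ abarList l j ≠ 0 := fun j => pow_ne_zero _ hα0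
      have hT : ∀ i : Fin l.length,
          vInt (α ^ k ^ abarList l i.1) (act k h c (l.get i))
            = vInt (α ^ k ^ abarList l i.1) (c (l.get i))
              + ((fun j => vInt (α ^ k ^ abarList l j) h) (i.1 + 1)
                - (fun j => vInt (α ^ k ^ abarList l j) h) i.1) := by
        intro i
        have heq : (α ^ k ^ abarList l i.1) ^ k ^ ((l.get i).1 + 1)
            = α ^ k ^ abarList l (i.1 + 1) := by
          rw [← pow_mul, ← pow_add, MyAux.abarList_succ l i]
        rw [MyAux.vInt_act k hkpos hK hh _ (hγ0 i.1) (l.get i) (h0 i), heq]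
      rw [Finset.sum_congr rfl (fun i _ => hT i), Finset.sum_add_distrib]
      have htel : ∑ i : Fin l.length,
          ((fun j => vInt (α ^ k ^ abarList l j) h) (i.1 + 1)
            - (fun j => vInt (α ^ k ^ abarList l j) h) i.1) = 0 := by
        rw [Fin.sum_univ_eq_sum_range
          (fun i => (fun j => vInt (α ^ k ^ abarList l j) h) (i + 1)
            - (fun j => vInt (α ^ k ^ abarList l j) h) i) l.length,
          Finset.sum_range_sub (fun j => vInt (α ^ k ^ abarList l j) h) l.length]
        simp only [MyAux.abarList_length l, hcyc]
        have : abarList l 0 = 0 := rfl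
        rw [this, pow_zero, pow_one]
        ring
      rw [htel, add_zero]
end

section
/- Let (c_1,…,c_n) be a k-calm sequence of rational functions in K(z). Then there exists a nonzero polynomial h ∈ K[z] such that h*(c_i) = (h(z^{k^i})/h(z) · c_i(z))_{i=1}^n is a sequence of polynomials. -/
open Polynomial

attribute [local instance] Classical.propDecidable

section Aux

variable {K : Type*} [Field K]

lemma dvd_of_rootMult [IsAlgClosed K] {p q : Polynomial K} (hq : q ≠ 0)
    (h : ∀ α : K, q.rootMultiplicity α ≤ p.rootMultiplicity α) : q ∣ p := by
  classical
  refine (IsAlgClosed.splits q).dvd_of_roots_le_roots hq ?_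
  rw [Multiset.le_iff_count]
  intro a
  simpa [Polynomial.count_roots] using h a

lemma X_pow_sub_one_ne_zero {M : ℕ} (hM : M ≠ 0) : (X ^ M - 1 : Polynomial K) ≠ 0 := by
  simpa using X_pow_sub_C_ne_zero (Nat.pos_of_ne_zero hM) (1 : K)

lemma rootMult_X_pow_sub_one {M : ℕ} (hM : (M : K) ≠ 0) (γ : K) :
    (X ^ M - 1 : Polynomial K).rootMultiplicity γ = if γ ^ M = 1 then 1 else 0 := by
  classical
  have hM0 : M ≠ 0 := by rintro rfl; simp at hM
  have hsep : (X ^ M - 1 : Polynomial K).Separable := by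
    simpa using separable_X_pow_sub_C (1 : K) hM one_ne_zero
  by_cases hγ : γ ^ M = 1
  · rw [if_pos hγ]
    have h1 : 0 < (X ^ M - 1 : Polynomial K).rootMultiplicity γ := by
      rw [rootMultiplicity_pos (X_pow_sub_one_ne_zero hM0)]
      simp [IsRoot, hγ]
    have h2 := rootMultiplicity_le_one_of_separable hsep γ
    omega
  · rw [if_neg hγ]
    apply rootMultiplicity_eq_zero
    simp [IsRoot, sub_eq_zero, hγ]

lemma rootMult_prod {ι : Type*} (s : Finset ι) (f : ι → Polynomial K)
    (hf : ∀ i ∈ s, f i ≠ 0) (γ : K) :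
    (∏ i ∈ s, f i).rootMultiplicity γ = ∑ i ∈ s, (f i).rootMultiplicity γ := by
  classical
  induction s using Finset.induction with
  | empty => simp [rootMultiplicity_eq_zero (by simp [IsRoot] : ¬ (1 : Polynomial K).IsRoot γ)]
  | @insert a s ha ih =>
    rw [Finset.prod_insert ha, Finset.sum_insert ha,
      rootMultiplicity_mul (mul_ne_zero (hf a (by simp)) (Finset.prod_ne_zero_iff.2
        fun i hi => hf i (by simp [hi]))), ih fun i hi => hf i (by simp [hi])]

lemma rootMult_pow (p : Polynomial K) (N : ℕ) (γ : K) :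
    (p ^ N).rootMultiplicity γ = N * p.rootMultiplicity γ := by
  classical
  rw [← Polynomial.count_roots, ← Polynomial.count_roots, roots_pow, Multiset.count_nsmul]

lemma rootMult_dvd {p q : Polynomial K} (hq : q ≠ 0) (h : p ∣ q) (γ : K) :
    p.rootMultiplicity γ ≤ q.rootMultiplicity γ := by
  classical
  obtain ⟨r, rfl⟩ := h
  rcases mul_ne_zero_iff.1 hq with ⟨hp, hr⟩
  rw [rootMultiplicity_mul hq]
  omega

lemma rootMult_le_natDegree {p : Polynomial K} (hp : p ≠ 0) (γ : K) :
    p.rootMultiplicity γ ≤ p.natDegree := by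
  have := Polynomial.natDegree_le_of_dvd (pow_rootMultiplicity_dvd p γ) hp
  simpa [natDegree_pow] using this

lemma substPow_toRat (m : ℕ) (h : Polynomial K) :
    substPow m (toRat h) = toRat (h.comp (X ^ m)) := by
  rw [substPow, toRat, RatFunc.eval_algebraMap]
  have hid : (algebraMap (Polynomial K) (Polynomial K)) h = h := rfl
  rw [hid]
  have hh := Polynomial.hom_eval₂ h (C : K →+* Polynomial K)
    (algebraMap (Polynomial K) (RatFunc K)) (X ^ m)
  have hcomp : h.comp (X ^ m) = h.eval₂ C (X ^ m) := rfl
  rw [toRat, hcomp, hh, map_pow, RatFunc.algebraMap_X]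
  congr 1

lemma cast_orderOf_ne_zero {α : K} (hα : 0 < orderOf α) :
    ((orderOf α : ℕ) : K) ≠ 0 := by
  intro h0
  set d := orderOf α with hd
  have hchar : ringChar K ∣ d := (CharP.cast_eq_zero_iff K (ringChar K) d).1 h0
  have hp : (ringChar K).Prime := by
    rcases CharP.char_is_prime_or_zero K (ringChar K) with h | h
    · exact h
    · rw [h] at hchar; omega
  set p := ringChar K
  have hpd : p ∣ d := hchar
  have hplt : 1 < p := hp.one_lt
  have hdp : 0 < d / p := Nat.div_pos (Nat.le_of_dvd hα hpd) (by omega)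
  set β := α ^ (d / p) with hβ
  have hβp : β ^ p = 1 := by
    rw [hβ, ← pow_mul, Nat.div_mul_cancel hpd, hd, pow_orderOf_eq_one]
  have hβ1 : β ≠ 1 := by
    intro h
    have h1 := orderOf_dvd_of_pow_eq_one (hβ ▸ h : α ^ (d / p) = 1)
    rw [← hd] at h1
    have h2 := Nat.le_of_dvd hdp h1
    have h3 : d / p < d := Nat.div_lt_self hα hplt
    omega
  apply hβ1
  have hz : (β - 1) ^ p = 0 := by
    haveI : Fact (p.Prime) := ⟨hp⟩
    haveI : CharP K p := ringChar.charP K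
    rw [sub_pow_char, hβp, one_pow, sub_self]
  have := pow_eq_zero_iff (by omega : p ≠ 0) |>.1 hz
  exact sub_eq_zero.1 this

lemma toRat_ne_zero {p : Polynomial K} (hp : p ≠ 0) : toRat p ≠ 0 :=
  RatFunc.algebraMap_ne_zero hp

end Aux

theorem stmt2 {K : Type*} [Field K] [IsAlgClosed K] (k : ℕ) (hk : 2 ≤ k)
    (hch : ∀ p : ℕ, p.Prime → CharP K p → ¬ p ∣ k)
    {n : ℕ} (c : Fin n → RatFunc K) (hc : ∀ i, IsCalmFun k (c i)) :
    ∃ h : Polynomial K, h ≠ 0 ∧ ∀ i, IsPolyFun (act k (toRat h) c i) := by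
  classical
  -- the characteristic does not divide k
  have hkK : (k : K) ≠ 0 := by
    intro h0
    have hchar : ringChar K ∣ k := (CharP.cast_eq_zero_iff K _ k).1 h0
    rcases CharP.char_is_prime_or_zero K (ringChar K) with hp | hp
    · exact hch _ hp (ringChar.charP K) hchar
    · rw [hp] at hchar; omega
  set D : Polynomial K := ∏ i : Fin n, (c i).denom with hDdef
  have hD0 : D ≠ 0 := Finset.prod_ne_zero_iff.2 fun i _ => (c i).denom_ne_zero
  set N : ℕ := D.natDegree + 1 with hNdef
  set S : Finset K := D.roots.toFinset.erase 0 with hSdef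
  set M : K → ℕ := fun α => orderOf α / (Nat.gcd (orderOf α) k).minFac with hMdef
  -- every element of S is a nonzero calm number
  have hS : ∀ α ∈ S, α ≠ 0 ∧ 0 < orderOf α ∧ ¬ Nat.Coprime (orderOf α) k := by
    intro α hα
    rw [hSdef, Finset.mem_erase, Multiset.mem_toFinset, mem_roots hD0] at hα
    obtain ⟨hα0, hroot⟩ := hα
    refine ⟨hα0, ?_⟩
    have hex : ∃ i : Fin n, ((c i).denom).IsRoot α := by
      by_contra hcon
      push_neg at hcon
      have hne : D.eval α ≠ 0 := by
        rw [hDdef, eval_prod]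
        exact Finset.prod_ne_zero_iff.2 fun i _ => hcon i
      exact hne hroot
    obtain ⟨i, hi⟩ := hex
    have hci : c i ≠ 0 := by
      intro h
      rw [h] at hi
      simp [IsRoot] at hi
    have hnum : ((c i).num).rootMultiplicity α = 0 := by
      apply rootMultiplicity_eq_zero
      intro hr
      obtain ⟨a, b, hab⟩ := (c i).isCoprime_num_denom
      have := congrArg (Polynomial.eval α) hab
      simp [hr.eq_zero, hi.eq_zero] at this
    by_contra hanx
    have hA : IsAnxious k α := by
      rw [IsAnxious, IsCalmNum]
      push_neg
      exact ⟨fun h => hα0 h, fun h1 => not_not.1 fun h2 => hanx ⟨h1, h2⟩⟩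
    have hv := hc i α hA
    rw [vAt, if_neg hci, vInt, hnum] at hv
    have hd : 0 < ((c i).denom).rootMultiplicity α := by
      rw [rootMultiplicity_pos (c i).denom_ne_zero]; exact hi
    have : (0 : ℤ) ≤ 0 - ((c i).denom).rootMultiplicity α := by exact_mod_cast hv
    omega
  -- key properties of M on S
  have hM : ∀ α ∈ S, 0 < M α ∧ (M α : K) ≠ 0 ∧ α ^ M α ≠ 1 ∧
      ∀ j : ℕ, 1 ≤ j → α ^ (M α * k ^ j) = 1 := by
    intro α hα
    obtain ⟨hα0, hd, hcop⟩ := hS α hα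
    set d := orderOf α with hdd
    set g := Nat.gcd d k with hgdef
    have hg1 : g ≠ 1 := hcop
    set p := g.minFac with hpdef
    have hp : p.Prime := Nat.minFac_prime hg1
    have hpd : p ∣ d := (Nat.minFac_dvd g).trans (Nat.gcd_dvd_left d k)
    have hpk : p ∣ k := (Nat.minFac_dvd g).trans (Nat.gcd_dvd_right d k)
    have hMα : M α = d / p := rfl
    have hpos : 0 < M α := by
      rw [hMα]; exact Nat.div_pos (Nat.le_of_dvd hd hpd) hp.pos
    have hmul : M α * p = d := by rw [hMα]; exact Nat.div_mul_cancel hpd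
    refine ⟨hpos, ?_, ?_, ?_⟩
    · have hdK := cast_orderOf_ne_zero (K := K) (α := α) hd
      intro h0
      apply hdK
      rw [← hdd, ← hmul]
      push_cast
      rw [h0, zero_mul]
    · intro h1
      have hdvd := orderOf_dvd_of_pow_eq_one h1
      rw [← hdd] at hdvd
      have h2 := Nat.le_of_dvd hpos hdvd
      have h3 : M α < d := by
        rw [hMα]; exact Nat.div_lt_self hd hp.one_lt
      omega
    · intro j hj
      apply orderOf_dvd_iff_pow_eq_one.1
      rw [← hdd, ← hmul]
      exact Nat.mul_dvd_mul_left (M α) (dvd_pow hpk (by omega))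
  -- the polynomial h
  set h : Polynomial K := X ^ N * ∏ α ∈ S, (X ^ (M α) - 1) ^ N with hhdef
  have hMne : ∀ α ∈ S, M α ≠ 0 := fun α hα => (hM α hα).1.ne'
  have hfac_ne : ∀ α ∈ S, ((X : Polynomial K) ^ (M α) - 1) ^ N ≠ 0 :=
    fun α hα => pow_ne_zero _ (X_pow_sub_one_ne_zero (hMne α hα))
  have hprod_ne : (∏ α ∈ S, ((X : Polynomial K) ^ (M α) - 1) ^ N) ≠ 0 :=
    Finset.prod_ne_zero_iff.2 hfac_ne
  have hh0 : h ≠ 0 := mul_ne_zero (pow_ne_zero _ X_ne_zero) hprod_ne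
  -- generic root multiplicity computation
  have hrm : ∀ (A : ℕ) (W : K → ℕ), (∀ α ∈ S, W α ≠ 0) → (∀ α ∈ S, (W α : K) ≠ 0) → ∀ γ : K,
      (X ^ A * ∏ α ∈ S, (X ^ (W α) - 1) ^ N : Polynomial K).rootMultiplicity γ =
      A * (if γ = 0 then 1 else 0) + ∑ α ∈ S, N * (if γ ^ (W α) = 1 then 1 else 0) := by
    intro A W hW0 hWK γ
    have hfne : ∀ α ∈ S, ((X : Polynomial K) ^ (W α) - 1) ^ N ≠ 0 :=
      fun α hα => pow_ne_zero _ (X_pow_sub_one_ne_zero (hW0 α hα))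
    have hpne : (∏ α ∈ S, ((X : Polynomial K) ^ (W α) - 1) ^ N) ≠ 0 :=
      Finset.prod_ne_zero_iff.2 hfne
    rw [rootMultiplicity_mul (mul_ne_zero (pow_ne_zero _ X_ne_zero) hpne),
      rootMult_prod S _ hfne, rootMult_pow]
    congr 1
    · have : (X : Polynomial K).rootMultiplicity γ = if γ = 0 then 1 else 0 := by
        rw [show (X : Polynomial K) = X - C 0 by simp, rootMultiplicity_X_sub_C]
      rw [this]
    · refine Finset.sum_congr rfl fun α hα => ?_
      rw [rootMult_pow, rootMult_X_pow_sub_one (hWK α hα)]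
  have hMK : ∀ α ∈ S, (M α : K) ≠ 0 := fun α hα => (hM α hα).2.1
  refine ⟨h, hh0, fun i => ?_⟩
  by_cases hci : c i = 0
  · exact ⟨0, by simp [act, hci, toRat]⟩
  set m : ℕ := k ^ (i.1 + 1) with hmdef
  have hm2 : 2 ≤ m := le_trans hk (Nat.le_self_pow (by omega) k)
  have hmK0 : ((m : ℕ) : K) ≠ 0 := by
    rw [hmdef]; push_cast; exact pow_ne_zero _ hkK
  have hmK : ∀ α ∈ S, ((M α * m : ℕ) : K) ≠ 0 := by
    intro α hα
    push_cast
    exact mul_ne_zero (hMK α hα) hmK0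
  set H : Polynomial K := X ^ (N * m) * ∏ α ∈ S, (X ^ (M α * m) - 1) ^ N with hHdef
  have hH0 : H ≠ 0 := mul_ne_zero (pow_ne_zero _ X_ne_zero)
    (Finset.prod_ne_zero_iff.2 fun α hα =>
      pow_ne_zero _ (X_pow_sub_one_ne_zero (by
        have := hMne α hα; positivity)))
  have hHcomp : h.comp (X ^ m) = H := by
    rw [hhdef, hHdef, mul_comp, pow_comp, X_comp, Polynomial.prod_comp, ← pow_mul,
      mul_comm m N]
    congr 1
    refine Finset.prod_congr rfl fun α hα => ?_
    rw [pow_comp, sub_comp, pow_comp, X_comp, one_comp, ← pow_mul, mul_comm m (M α)]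
  set u : Polynomial K := (c i).num with hudef
  set v : Polynomial K := (c i).denom with hvdef
  have hu0 : u ≠ 0 := RatFunc.num_ne_zero hci
  have hv0 : v ≠ 0 := (c i).denom_ne_zero
  have hvD : v ∣ D := Finset.dvd_prod_of_mem _ (Finset.mem_univ i)
  -- the key root multiplicity inequality
  have key : ∀ γ : K, (h * v).rootMultiplicity γ ≤ (H * u).rootMultiplicity γ := by
    intro γ
    rw [rootMultiplicity_mul (mul_ne_zero hh0 hv0), rootMultiplicity_mul (mul_ne_zero hH0 hu0)]
    have hrmh := hrm N M hMne hMK γ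
    have hrmH := hrm (N * m) (fun α => M α * m) (fun α hα => by have := hMne α hα; positivity)
      hmK γ
    rw [← hhdef] at hrmh
    rw [← hHdef] at hrmH
    have hvN : v.rootMultiplicity γ ≤ N := by
      have h1 := rootMult_dvd hD0 hvD γ
      have h2 := rootMult_le_natDegree hD0 γ
      omega
    have hub : 0 ≤ u.rootMultiplicity γ := Nat.zero_le _
    by_cases hv : 0 < v.rootMultiplicity γ
    · by_cases hγ0 : γ = 0
      · subst hγ0
        have hz : ∀ α ∈ S, ((0 : K) ^ (M α) = 1) = False := by
          intro α hα
          simp [zero_pow (hMne α hα)]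
        have hz2 : ∀ α ∈ S, ((0 : K) ^ (M α * m) = 1) = False := by
          intro α hα
          have : M α * m ≠ 0 := by have := hMne α hα; positivity
          simp [zero_pow this]
        rw [hrmh, hrmH]
        have e1 : ∑ α ∈ S, N * (if (0:K) ^ (M α) = 1 then 1 else 0) = 0 :=
          Finset.sum_eq_zero fun α hα => by rw [hz α hα]; simp
        have e2 : ∑ α ∈ S, N * (if (0:K) ^ (M α * m) = 1 then 1 else 0) = 0 :=
          Finset.sum_eq_zero fun α hα => by rw [hz2 α hα]; simp
        rw [e1, e2, if_pos (rfl : (0 : K) = 0)]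
        have : N * 2 ≤ N * m := Nat.mul_le_mul_left N hm2
        omega
      · -- γ is a nonzero root of v, hence of D, hence γ ∈ S
        have hγS : γ ∈ S := by
          rw [hSdef, Finset.mem_erase, Multiset.mem_toFinset, mem_roots hD0]
          refine ⟨hγ0, ?_⟩
          have : 0 < D.rootMultiplicity γ := lt_of_lt_of_le hv (rootMult_dvd hD0 hvD γ)
          exact (rootMultiplicity_pos hD0).1 this
        obtain ⟨hMpos, hMKγ, hMne1, hMone⟩ := hM γ hγS
        have hterm : ∀ α ∈ S,
            N * (if γ ^ (M α) = 1 then 1 else 0) + (if α = γ then N else 0) ≤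
            N * (if γ ^ (M α * m) = 1 then 1 else 0) := by
          intro α hα
          by_cases hαγ : α = γ
          · subst hαγ
            rw [if_neg hMne1, if_pos (hMone (i.1 + 1) (by omega)), if_pos rfl]
            omega
          · rw [if_neg hαγ]
            by_cases h1 : γ ^ (M α) = 1
            · have h2 : γ ^ (M α * m) = 1 := by rw [pow_mul, h1, one_pow]
              rw [if_pos h1, if_pos h2]
              omega
            · rw [if_neg h1]
              omega
        have hsum := Finset.sum_le_sum hterm
        rw [Finset.sum_add_distrib, Finset.sum_ite_eq' S γ (fun _ => N), if_pos hγS] at hsum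
        rw [hrmh, hrmH]
        have hind : (if γ = 0 then 1 else 0 : ℕ) = 0 := by rw [if_neg hγ0]
        rw [hind]
        omega
    · -- no pole of c i at γ; just compare h and H
      have hle : ∀ α ∈ S,
          N * (if γ ^ (M α) = 1 then 1 else 0) ≤ N * (if γ ^ (M α * m) = 1 then 1 else 0) := by
        intro α hα
        by_cases h1 : γ ^ (M α) = 1
        · have h2 : γ ^ (M α * m) = 1 := by rw [pow_mul, h1, one_pow]
          rw [if_pos h1, if_pos h2]
        · rw [if_neg h1]; omega
      have hsum := Finset.sum_le_sum hle
      have hA : N * (if γ = 0 then 1 else 0) ≤ N * m * (if γ = 0 then 1 else 0) := by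
        have : N ≤ N * m := Nat.le_mul_of_pos_right N (by omega)
        by_cases hγ0 : γ = 0 <;> simp [hγ0] <;> omega
      rw [hrmh, hrmH]
      omega
  -- conclude via divisibility
  have hdvd : (h * v) ∣ (H * u) := dvd_of_rootMult (mul_ne_zero hh0 hv0) key
  obtain ⟨g, hg⟩ := hdvd
  refine ⟨g, ?_⟩
  have hsub : substPow m (toRat h) = toRat H := by
    rw [substPow_toRat, hHcomp]
  show substPow (k ^ (i.1 + 1)) (toRat h) / toRat h * c i = toRat g
  rw [← hmdef, hsub,
    show c i = toRat u / toRat v from (RatFunc.num_div_denom (c i)).symm,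
    div_mul_div_comm,
    show toRat H * toRat u = toRat (H * u) from (map_mul (algebraMap (Polynomial K) (RatFunc K)) _ _).symm,
    show toRat h * toRat v = toRat (h * v) from (map_mul (algebraMap (Polynomial K) (RatFunc K)) _ _).symm,
    hg,
    show toRat (h * v * g) = toRat (h * v) * toRat g from
      map_mul (algebraMap (Polynomial K) (RatFunc K)) _ _]
  exact mul_div_cancel_left₀ _ (toRat_ne_zero (mul_ne_zero hh0 hv0))
end
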